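/- Let α, β ∈ ℕ³ with β₀ = 0, β₁ ≥ 1, α₀ ≥ 1, ‖α+β‖_∞ ≤ |α| + 1, and α₂ + β₂ < |α| + 1. Then R^α_β, R^{α−e₀}_{β−e₁} and R^{α−e₀+e₂}_β are all Lebesgue integrable on T, and ∫_T R^α_β d(x,y) = ∫_T R^{α−e₀}_{β−e₁} d(x,y) − ∫_T R^{α−e₀+e₂}_β d(x,y). -/

import Mathlib

open MeasureTheory

/-- The rational function `R^α_β` on the standard triangle, in the coordinates
`λ₀ = 1-x-y`, `λ₁ = x`, `λ₂ = y` (so `1-λ₀ = x+y`, `1-λ₁ = 1-x`, `1-λ₂ = 1-y`). -/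
noncomputable def ratR (α₀ α₁ α₂ β₀ β₁ β₂ : ℕ) (q : ℝ × ℝ) : ℝ :=
  (1 - q.1 - q.2) ^ α₀ * q.1 ^ α₁ * q.2 ^ α₂ /
    ((q.1 + q.2) ^ β₀ * (1 - q.1) ^ β₁ * (1 - q.2) ^ β₂)

/-- The standard triangle `T ⊂ ℝ²`. -/
def stdTri : Set (ℝ × ℝ) := {q | 0 ≤ q.1 ∧ 0 ≤ q.2 ∧ q.1 + q.2 ≤ 1}

open Set

section Aux

/-- Key pointwise inequality. -/
lemma lemA (a₀ a₁ a₂ b₁ b₂ : ℕ) (hb₁ : b₁ ≤ a₀ + a₂ + 1) (hb₂ : b₂ ≤ a₀ + a₁ + 1)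
    {x y : ℝ} (hx : 0 ≤ x) (hy : 0 ≤ y) (hxy : x + y ≤ 1) :
    (1 - x - y) ^ a₀ * x ^ a₁ * y ^ a₂ * ((1 - x) * (1 - y)) ≤
      (1 - x) ^ b₁ * (1 - y) ^ b₂ := by
  set l₀ : ℝ := 1 - x - y with hl₀
  set u : ℝ := 1 - x with hu
  set w : ℝ := 1 - y with hw
  have h0 : 0 ≤ l₀ := by simp [hl₀]; linarith
  have hu0 : 0 ≤ u := by simp [hu]; linarith
  have hw0 : 0 ≤ w := by simp [hw]; linarith
  have hu1 : u ≤ 1 := by simp [hu]; linarith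
  have hw1 : w ≤ 1 := by simp [hw]; linarith
  have hl1 : l₀ ≤ 1 := by simp [hl₀]; linarith
  have hx1 : x ≤ 1 := by linarith
  have hy1 : y ≤ 1 := by linarith
  have hlu : l₀ ≤ u := by simp [hl₀, hu]; linarith
  have hyu : y ≤ u := by simp [hu]; linarith
  have hlw : l₀ ≤ w := by simp [hl₀, hw]; linarith
  have hxw : x ≤ w := by simp [hw]; linarith
  have hluw : l₀ ≤ u * w := by nlinarith [mul_nonneg hx hy]
  set B₁ := b₁ - 1 with hB₁def
  set B₂ := b₂ - 1 with hB₂def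
  set d' := min B₁ a₂ with hd'def
  set L₁ := B₁ - d' with hL₁def
  set d := min B₂ a₁ with hddef
  set L₂ := B₂ - d with hL₂def
  set p := min L₁ L₂ with hpdef
  set c' := L₁ - p with hc'def
  set c := L₂ - p with hcdef
  have hM : p + c' + c ≤ a₀ := by omega
  have hd : d ≤ a₁ := by omega
  have hd' : d' ≤ a₂ := by omega
  have hsB₁ : p + c' + d' = B₁ := by omega
  have hsB₂ : p + c + d = B₂ := by omega
  have key : l₀ ^ a₀ * x ^ a₁ * y ^ a₂ ≤ u ^ B₁ * w ^ B₂ := by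
    calc l₀ ^ a₀ * x ^ a₁ * y ^ a₂
        ≤ l₀ ^ (p + c' + c) * x ^ d * y ^ d' := by
          apply mul_le_mul
          apply mul_le_mul
          · exact pow_le_pow_of_le_one h0 hl1 hM
          · exact pow_le_pow_of_le_one hx hx1 hd
          · positivity
          · positivity
          · exact pow_le_pow_of_le_one hy hy1 hd'
          · positivity
          · positivity
      _ = l₀ ^ p * (l₀ ^ c' * y ^ d') * (l₀ ^ c * x ^ d) := by
          rw [pow_add, pow_add]; ring
      _ ≤ (u * w) ^ p * (u ^ c' * u ^ d') * (w ^ c * w ^ d) := by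
          gcongr
      _ = u ^ (p + c' + d') * w ^ (p + c + d) := by
          rw [mul_pow, pow_add, pow_add, pow_add, pow_add]; ring
      _ = u ^ B₁ * w ^ B₂ := by rw [hsB₁, hsB₂]
  calc l₀ ^ a₀ * x ^ a₁ * y ^ a₂ * (u * w)
      ≤ u ^ B₁ * w ^ B₂ * (u * w) := by
        apply mul_le_mul_of_nonneg_right key (by positivity)
    _ = u ^ (B₁ + 1) * w ^ (B₂ + 1) := by rw [pow_add, pow_add]; ring
    _ ≤ u ^ b₁ * w ^ b₂ := by
        apply mul_le_mul
        · exact pow_le_pow_of_le_one hu0 hu1 (by omega)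
        · exact pow_le_pow_of_le_one hw0 hw1 (by omega)
        · positivity
        · positivity


lemma meas_stdTri : MeasurableSet stdTri := by
  apply MeasurableSet.inter
  · exact measurableSet_le measurable_const measurable_fst
  apply MeasurableSet.inter
  · exact measurableSet_le measurable_const measurable_snd
  · exact measurableSet_le (measurable_fst.add measurable_snd) measurable_const

lemma slice_int {x : ℝ} (hx : 0 < x) (hx1 : x < 1) :
    IntegrableOn (fun y : ℝ => ((1 - x) * (1 - y))⁻¹) (Icc 0 (1 - x)) := by
  apply ContinuousOn.integrableOn_compact isCompact_Icc
  apply ContinuousOn.inv₀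
  · fun_prop
  · rintro y ⟨hy0, hy1⟩
    have h1 : x ≤ 1 - y := by linarith
    have h2 : (0:ℝ) < 1 - x := by linarith
    have h3 : (0:ℝ) < 1 - y := by linarith
    positivity

lemma rhs_int {x : ℝ} (hx : 0 < x) (hx1 : x < 1) :
    IntegrableOn (fun y : ℝ => x ^ (-(1/2) : ℝ) * (1 - x)⁻¹ * (1 - y) ^ (-(1/2) : ℝ))
      (Icc 0 (1 - x)) := by
  apply ContinuousOn.integrableOn_compact isCompact_Icc
  apply ContinuousOn.mul continuousOn_const
  intro y hy
  obtain ⟨hy0, hy1⟩ := hy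
  have h3 : (0:ℝ) < 1 - y := by linarith
  apply ContinuousAt.continuousWithinAt
  apply ContinuousAt.rpow_const
  · fun_prop
  · left; positivity

lemma lemB : IntegrableOn (fun q : ℝ × ℝ => ((1 - q.1) * (1 - q.2))⁻¹) stdTri := by
  rw [← integrable_indicator_iff meas_stdTri]
  have hmeas : AEStronglyMeasurable
      (stdTri.indicator (fun q : ℝ × ℝ => ((1 - q.1) * (1 - q.2))⁻¹)) (volume : Measure (ℝ × ℝ)) := by
    apply AEStronglyMeasurable.indicator _ meas_stdTri
    apply Measurable.aestronglyMeasurable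
    fun_prop
  rw [Measure.volume_eq_prod] at hmeas ⊢
  rw [integrable_prod_iff hmeas]
  have hneg : ∀ x : ℝ, x < 0 → (fun y => stdTri.indicator
      (fun q : ℝ × ℝ => ((1 - q.1) * (1 - q.2))⁻¹) (x, y)) = (fun _ => (0:ℝ)) := by
    intro x h
    funext y
    apply indicator_of_notMem
    intro hc
    obtain ⟨h0, -, -⟩ := hc
    linarith
  have hpos : ∀ x : ℝ, 0 < x → (fun y => stdTri.indicator
      (fun q : ℝ × ℝ => ((1 - q.1) * (1 - q.2))⁻¹) (x, y)) =
      (Icc 0 (1 - x)).indicator (fun y => ((1 - x) * (1 - y))⁻¹) := by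
    intro x h
    funext y
    by_cases hy : y ∈ Icc 0 (1 - x)
    · rw [indicator_of_mem hy]
      apply indicator_of_mem
      obtain ⟨h1, h2⟩ := hy
      exact ⟨le_of_lt h, h1, by linarith⟩
    · rw [indicator_of_notMem hy]
      apply indicator_of_notMem
      intro hc
      obtain ⟨-, h1, h2⟩ := hc
      exact hy ⟨h1, by linarith⟩
  have hICCnull : ∀ x : ℝ, 1 ≤ x → (volume : Measure ℝ) (Icc 0 (1 - x)) = 0 := by
    intro x h1
    rw [Real.volume_Icc]
    simp only [ENNReal.ofReal_eq_zero]
    linarith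
  constructor
  · filter_upwards [compl_mem_ae_iff.2 (Real.volume_singleton (a := (0:ℝ)))] with x hx
    have hx' : x ≠ 0 := by simpa using hx
    rcases lt_trichotomy x 0 with h | h | h
    · rw [hneg x h]; exact integrable_zero _ _ _
    · exact absurd h hx'
    · rw [hpos x h, integrable_indicator_iff measurableSet_Icc]
      rcases lt_or_ge x 1 with h1 | h1
      · exact slice_int h h1
      · unfold IntegrableOn
        rw [Measure.restrict_eq_zero.2 (hICCnull x h1)]
        exact integrable_zero_measure
  · have hg : Integrable ((Ioc (0:ℝ) 1).indicator (fun x => 2 * x ^ (-(1/2) : ℝ))) := by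
      rw [integrable_indicator_iff measurableSet_Ioc]
      have h1 : IntegrableOn (fun x : ℝ => x ^ (-(1/2) : ℝ)) (Ioc 0 1) := by
        have := (intervalIntegral.intervalIntegrable_rpow' (a := 0) (b := 1)
          (r := -(1/2)) (by norm_num)).1
        simpa using this
      exact h1.const_mul 2
    apply Integrable.mono' hg (hmeas.norm.integral_prod_right')
    have hgnn : ∀ x : ℝ, 0 ≤ (Ioc (0:ℝ) 1).indicator (fun x => 2 * x ^ (-(1/2) : ℝ)) x := by
      intro x
      apply indicator_nonneg
      intro z hz
      have := hz.1
      positivity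
    filter_upwards [compl_mem_ae_iff.2 (Real.volume_singleton (a := (0:ℝ)))] with x hx
    have hx' : x ≠ 0 := by simpa using hx
    have hnn : (0:ℝ) ≤ ∫ y, ‖stdTri.indicator
        (fun q : ℝ × ℝ => ((1 - q.1) * (1 - q.2))⁻¹) (x, y)‖ :=
      integral_nonneg fun y => norm_nonneg _
    rw [Real.norm_eq_abs, abs_of_nonneg hnn]
    rcases lt_trichotomy x 0 with h | h | h
    · have hz : (fun y : ℝ => ‖stdTri.indicator
          (fun q : ℝ × ℝ => ((1 - q.1) * (1 - q.2))⁻¹) (x, y)‖) = fun _ => (0:ℝ) := by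
        funext y
        have hy := congrFun (hneg x h) y
        rw [hy, norm_zero]
      rw [hz]
      simp only [integral_zero]
      exact hgnn x
    · exact absurd h hx'
    have hnorm : (fun y : ℝ => ‖stdTri.indicator
        (fun q : ℝ × ℝ => ((1 - q.1) * (1 - q.2))⁻¹) (x, y)‖) =
        (Icc 0 (1 - x)).indicator (fun y => ‖((1 - x) * (1 - y))⁻¹‖) := by
      funext y
      have hy := congrFun (hpos x h) y
      rw [hy, norm_indicator_eq_indicator_norm]
    rcases lt_or_ge x 1 with h1 | h1
    swap
    · rw [hnorm, integral_indicator measurableSet_Icc]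
      rw [Measure.restrict_eq_zero.2 (hICCnull x h1), integral_zero_measure]
      exact hgnn x
    -- main case 0 < x < 1
    have hxpos := h
    have hux : (0:ℝ) < 1 - x := by linarith
    have hnorm2 : (fun y : ℝ => ‖stdTri.indicator
        (fun q : ℝ × ℝ => ((1 - q.1) * (1 - q.2))⁻¹) (x, y)‖) =
        (Icc 0 (1 - x)).indicator (fun y => ((1 - x) * (1 - y))⁻¹) := by
      rw [hnorm]
      apply indicator_congr
      rintro y ⟨hy0, hy1⟩
      have h2 : (0:ℝ) < 1 - y := by linarith
      simp only [Real.norm_eq_abs]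
      rw [abs_of_nonneg (by positivity)]
    rw [hnorm2, integral_indicator measurableSet_Icc]
    have hmono : ∫ y in Icc 0 (1 - x), ((1 - x) * (1 - y))⁻¹ ≤
        ∫ y in Icc 0 (1 - x), x ^ (-(1/2) : ℝ) * (1 - x)⁻¹ * (1 - y) ^ (-(1/2) : ℝ) := by
      apply setIntegral_mono_on (slice_int h h1) (rhs_int h h1) measurableSet_Icc
      rintro y ⟨hy0, hy1⟩
      have h2 : x ≤ 1 - y := by linarith
      have h3 : (0:ℝ) < 1 - y := by linarith
      have e1 : (1 - y)⁻¹ = (1 - y) ^ (-(1/2) : ℝ) * (1 - y) ^ (-(1/2) : ℝ) := by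
        rw [← Real.rpow_add h3]
        norm_num [Real.rpow_neg_one]
      have key : (1 - y)⁻¹ ≤ x ^ (-(1/2) : ℝ) * (1 - y) ^ (-(1/2) : ℝ) := by
        rw [e1]
        exact mul_le_mul_of_nonneg_right
          (Real.rpow_le_rpow_of_nonpos hxpos h2 (by norm_num)) (by positivity)
      calc ((1 - x) * (1 - y))⁻¹ = (1 - y)⁻¹ * (1 - x)⁻¹ := by
            rw [mul_inv]; ring
        _ ≤ (x ^ (-(1/2) : ℝ) * (1 - y) ^ (-(1/2) : ℝ)) * (1 - x)⁻¹ :=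
            mul_le_mul_of_nonneg_right key (by positivity)
        _ = x ^ (-(1/2) : ℝ) * (1 - x)⁻¹ * (1 - y) ^ (-(1/2) : ℝ) := by ring
    have hval : ∫ y in Icc 0 (1 - x), x ^ (-(1/2) : ℝ) * (1 - x)⁻¹ * (1 - y) ^ (-(1/2) : ℝ) =
        x ^ (-(1/2) : ℝ) * (1 - x)⁻¹ * ((1 - x ^ ((1:ℝ)/2)) / (1/2)) := by
      rw [integral_Icc_eq_integral_Ioc]
      rw [← intervalIntegral.integral_of_le (by linarith : (0:ℝ) ≤ 1 - x)]
      rw [intervalIntegral.integral_const_mul]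
      congr 1
      have hc := intervalIntegral.integral_comp_sub_left (a := 0) (b := 1 - x)
        (fun u : ℝ => u ^ (-(1/2) : ℝ)) 1
      simp only [sub_zero, sub_sub_cancel] at hc
      rw [hc, integral_rpow (Or.inl (by norm_num))]
      norm_num [Real.one_rpow]
    rw [indicator_of_mem (Set.mem_Ioc.2 ⟨hxpos, h1.le⟩)]
    calc ∫ y in Icc 0 (1 - x), ((1 - x) * (1 - y))⁻¹
        ≤ x ^ (-(1/2) : ℝ) * (1 - x)⁻¹ * ((1 - x ^ ((1:ℝ)/2)) / (1/2)) := by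
          rw [← hval]; exact hmono
      _ ≤ 2 * x ^ (-(1/2) : ℝ) := by
          have hxh : x ≤ x ^ ((1:ℝ)/2) := by
            have := Real.rpow_le_rpow_of_exponent_ge hxpos h1.le
              (by norm_num : (1:ℝ)/2 ≤ 1)
            simpa [Real.rpow_one] using this
          have hkey : (1 - x ^ ((1:ℝ)/2)) * (1 - x)⁻¹ ≤ 1 := by
            rw [← div_eq_mul_inv, div_le_one hux]
            linarith
          calc x ^ (-(1/2) : ℝ) * (1 - x)⁻¹ * ((1 - x ^ ((1:ℝ)/2)) / (1/2))
              = 2 * x ^ (-(1/2) : ℝ) * ((1 - x ^ ((1:ℝ)/2)) * (1 - x)⁻¹) := by ring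
            _ ≤ 2 * x ^ (-(1/2) : ℝ) * 1 := by
                apply mul_le_mul_of_nonneg_left hkey (by positivity)
            _ = 2 * x ^ (-(1/2) : ℝ) := by ring

lemma null_fst_one : (volume : Measure (ℝ × ℝ)) {q : ℝ × ℝ | q.1 = 1} = 0 := by
  rw [Measure.volume_eq_prod]
  have h : {q : ℝ × ℝ | q.1 = 1} = ({1} : Set ℝ) ×ˢ (univ : Set ℝ) := by
    ext q
    simp only [Set.mem_setOf_eq, Set.mem_prod, Set.mem_singleton_iff, Set.mem_univ, and_true]
  rw [h, Measure.prod_prod]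
  simp

lemma null_snd_one : (volume : Measure (ℝ × ℝ)) {q : ℝ × ℝ | q.2 = 1} = 0 := by
  rw [Measure.volume_eq_prod]
  have h : {q : ℝ × ℝ | q.2 = 1} = (univ : Set ℝ) ×ˢ ({1} : Set ℝ) := by
    ext q
    simp only [Set.mem_setOf_eq, Set.mem_prod, Set.mem_singleton_iff, Set.mem_univ, true_and]
  rw [h, Measure.prod_prod]
  simp

lemma measurable_ratR (a₀ a₁ a₂ b₀ b₁ b₂ : ℕ) : Measurable (ratR a₀ a₁ a₂ b₀ b₁ b₂) := by
  unfold ratR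
  fun_prop

lemma ratR_nonneg (a₀ a₁ a₂ b₀ b₁ b₂ : ℕ) {q : ℝ × ℝ} (hq : q ∈ stdTri) :
    0 ≤ ratR a₀ a₁ a₂ b₀ b₁ b₂ q := by
  obtain ⟨h1, h2, h3⟩ := hq
  have h4 : 0 ≤ 1 - q.1 - q.2 := by linarith
  have h5 : 0 ≤ 1 - q.1 := by linarith
  have h6 : 0 ≤ 1 - q.2 := by linarith
  have h7 : 0 ≤ q.1 + q.2 := by linarith
  unfold ratR
  apply div_nonneg
  · exact mul_nonneg (mul_nonneg (pow_nonneg h4 _) (pow_nonneg h1 _)) (pow_nonneg h2 _)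
  · exact mul_nonneg (mul_nonneg (pow_nonneg h7 _) (pow_nonneg h5 _)) (pow_nonneg h6 _)

lemma integrableOn_ratR (a₀ a₁ a₂ b₁ b₂ : ℕ) (hb₁ : b₁ ≤ a₀ + a₂ + 1)
    (hb₂ : b₂ ≤ a₀ + a₁ + 1) : IntegrableOn (ratR a₀ a₁ a₂ 0 b₁ b₂) stdTri := by
  apply Integrable.mono' lemB
    ((measurable_ratR a₀ a₁ a₂ 0 b₁ b₂).aestronglyMeasurable)
  rw [ae_restrict_iff' meas_stdTri]
  filter_upwards [compl_mem_ae_iff.2 null_fst_one, compl_mem_ae_iff.2 null_snd_one]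
    with q hq1 hq2 hq
  obtain ⟨h1, h2, h3⟩ := hq
  have hq1' : q.1 ≠ 1 := by simpa using hq1
  have hq2' : q.2 ≠ 1 := by simpa using hq2
  have hu : (0:ℝ) < 1 - q.1 := by
    rcases lt_or_eq_of_le (by linarith : q.1 ≤ 1) with h | h
    · linarith
    · exact absurd h hq1'
  have hw : (0:ℝ) < 1 - q.2 := by
    rcases lt_or_eq_of_le (by linarith : q.2 ≤ 1) with h | h
    · linarith
    · exact absurd h hq2'
  rw [Real.norm_eq_abs, abs_of_nonneg (ratR_nonneg a₀ a₁ a₂ 0 b₁ b₂ ⟨h1, h2, h3⟩)]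
  unfold ratR
  rw [pow_zero, one_mul, inv_eq_one_div, div_le_div_iff₀ (by positivity) (by positivity),
    one_mul]
  exact lemA a₀ a₁ a₂ b₁ b₂ hb₁ hb₂ h1 h2 h3

end Aux

/-- For `β₀ = 0`, `β₁ ≥ 1`, `α₀ ≥ 1`, `‖α+β‖_∞ ≤ |α|+1` and `α₂+β₂ < |α|+1`, the
functions `R^α_β`, `R^{α-e₀}_{β-e₁}`, `R^{α-e₀+e₂}_β` are integrable on `T` and
`∫_T R^α_β = ∫_T R^{α-e₀}_{β-e₁} − ∫_T R^{α-e₀+e₂}_β`. -/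
theorem integral_rec_three_term (α₀ α₁ α₂ β₀ β₁ β₂ : ℕ)
    (hβ₀ : β₀ = 0) (hβ₁ : 1 ≤ β₁) (hα₀ : 1 ≤ α₀)
    (hmax : max (α₀ + β₀) (max (α₁ + β₁) (α₂ + β₂)) ≤ α₀ + α₁ + α₂ + 1)
    (hlt : α₂ + β₂ < α₀ + α₁ + α₂ + 1) :
    IntegrableOn (ratR α₀ α₁ α₂ β₀ β₁ β₂) stdTri ∧
    IntegrableOn (ratR (α₀ - 1) α₁ α₂ β₀ (β₁ - 1) β₂) stdTri ∧
    IntegrableOn (ratR (α₀ - 1) α₁ (α₂ + 1) β₀ β₁ β₂) stdTri ∧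
    (∫ q in stdTri, ratR α₀ α₁ α₂ β₀ β₁ β₂ q) =
      (∫ q in stdTri, ratR (α₀ - 1) α₁ α₂ β₀ (β₁ - 1) β₂ q) -
        (∫ q in stdTri, ratR (α₀ - 1) α₁ (α₂ + 1) β₀ β₁ β₂ q) := by
  subst hβ₀
  rw [max_le_iff, max_le_iff] at hmax
  obtain ⟨hm1, hm2, hm3⟩ := hmax
  obtain ⟨a, rfl⟩ : ∃ a, α₀ = a + 1 := ⟨α₀ - 1, by omega⟩
  obtain ⟨b, rfl⟩ : ∃ b, β₁ = b + 1 := ⟨β₁ - 1, by omega⟩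
  simp only [Nat.add_sub_cancel]
  have h₁ : IntegrableOn (ratR (a + 1) α₁ α₂ 0 (b + 1) β₂) stdTri :=
    integrableOn_ratR _ _ _ _ _ (by omega) (by omega)
  have h₂ : IntegrableOn (ratR a α₁ α₂ 0 b β₂) stdTri :=
    integrableOn_ratR _ _ _ _ _ (by omega) (by omega)
  have h₃ : IntegrableOn (ratR a α₁ (α₂ + 1) 0 (b + 1) β₂) stdTri :=
    integrableOn_ratR _ _ _ _ _ (by omega) (by omega)
  refine ⟨h₁, h₂, h₃, ?_⟩
  have hae : ∀ᵐ q ∂(volume.restrict stdTri),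
      ratR (a + 1) α₁ α₂ 0 (b + 1) β₂ q =
        ratR a α₁ α₂ 0 b β₂ q - ratR a α₁ (α₂ + 1) 0 (b + 1) β₂ q := by
    rw [ae_restrict_iff' meas_stdTri]
    filter_upwards [compl_mem_ae_iff.2 null_fst_one, compl_mem_ae_iff.2 null_snd_one]
      with q hq1 hq2 hq
    obtain ⟨h1, h2, h3⟩ := hq
    have hq1' : q.1 ≠ 1 := by simpa using hq1
    have hq2' : q.2 ≠ 1 := by simpa using hq2
    have hu : (1:ℝ) - q.1 ≠ 0 := by
      intro hc
      exact hq1' (by linarith)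
    have hw : (1:ℝ) - q.2 ≠ 0 := by
      intro hc
      exact hq2' (by linarith)
    unfold ratR
    simp only [pow_zero, one_mul]
    have ht : (1:ℝ) - q.1 - q.2 = (1 - q.1) - q.2 := by ring
    field_simp
    ring
  calc (∫ q in stdTri, ratR (a + 1) α₁ α₂ 0 (b + 1) β₂ q)
      = ∫ q in stdTri, (ratR a α₁ α₂ 0 b β₂ q - ratR a α₁ (α₂ + 1) 0 (b + 1) β₂ q) :=
        integral_congr_ae hae
    _ = (∫ q in stdTri, ratR a α₁ α₂ 0 b β₂ q) -
          ∫ q in stdTri, ratR a α₁ (α₂ + 1) 0 (b + 1) β₂ q :=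
        integral_sub h₂ h₃
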